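/- In an equilateral triangular lattice of side d with d ≥ √3·R_S, no point of the plane is covered by three or more disks of radius R_S centered at lattice points; i.e., every point is covered by at most two sensors. -/

import Mathlib

open Real Metric

lemma aux_int_pos (a b : ℤ) (h : ¬(a = 0 ∧ b = 0)) : 1 ≤ a ^ 2 + a * b + b ^ 2 := by
  rcases eq_or_ne b 0 with rfl | hb0
  · have ha0 : a ≠ 0 := fun h' => h ⟨h', rfl⟩
    have h1 : 1 ≤ |a| := Int.one_le_abs ha0
    nlinarith [sq_abs a]
  · have h1 : 1 ≤ |b| := Int.one_le_abs hb0
    have h2 : 1 ≤ b ^ 2 := by nlinarith [sq_abs b]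
    have h3 : 3 ≤ 4 * (a ^ 2 + a * b + b ^ 2) := by nlinarith [sq_nonneg (2 * a + b)]
    omega

set_option maxHeartbeats 1000000 in
/-- In an equilateral triangular lattice of side `d ≥ √3·R_S`, no point of the plane lies
in the open sensing disks of three distinct lattice points: every point is covered by at
most two sensors. -/
theorem at_most_two_coverage (R_S d : ℝ) (hR : 0 < R_S) (hd : Real.sqrt 3 * R_S ≤ d)
    (v₁ v₂ : EuclideanSpace ℝ (Fin 2))
    (hv₁ : v₁ = (!₂[d, 0] : EuclideanSpace ℝ (Fin 2)))
    (hv₂ : v₂ = (!₂[d / 2, d * Real.sqrt 3 / 2] : EuclideanSpace ℝ (Fin 2)))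
    (Λ : Set (EuclideanSpace ℝ (Fin 2)))
    (hΛ : Λ = {p | ∃ m n : ℤ, p = (m : ℝ) • v₁ + (n : ℝ) • v₂}) :
    ∀ z : EuclideanSpace ℝ (Fin 2), ∀ p ∈ Λ, ∀ q ∈ Λ, ∀ r ∈ Λ,
      p ≠ q → p ≠ r → q ≠ r →
      ¬(dist z p < R_S ∧ dist z q < R_S ∧ dist z r < R_S) := by
  have hsq3 : Real.sqrt 3 ^ 2 = 3 := Real.sq_sqrt (by norm_num)
  have hs3pos : (0:ℝ) < Real.sqrt 3 := Real.sqrt_pos.mpr (by norm_num)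
  have hd0 : 0 < d := lt_of_lt_of_le (by positivity) hd
  have hRd : 3 * R_S ^ 2 ≤ d ^ 2 := by
    have h := mul_nonneg (sub_nonneg.mpr hd) (by positivity : (0:ℝ) ≤ d + Real.sqrt 3 * R_S)
    nlinarith
  intro z p hp q hq r hr hpq hpr hqr
  rintro ⟨hzp, hzq, hzr⟩
  -- minimum distance in the lattice
  have key : ∀ x ∈ Λ, ∀ y ∈ Λ, x ≠ y → d ^ 2 ≤ dist x y ^ 2 := by
    rw [hΛ]
    rintro x ⟨m₁, n₁, rfl⟩ y ⟨m₂, n₂, rfl⟩ hxy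
    have hmn : ¬(m₁ - m₂ = 0 ∧ n₁ - n₂ = 0) := by
      rintro ⟨h1, h2⟩
      have e1 : m₁ = m₂ := by omega
      have e2 : n₁ = n₂ := by omega
      exact hxy (by rw [e1, e2])
    have hk := aux_int_pos (m₁ - m₂) (n₁ - n₂) hmn
    have hexp : dist ((m₁ : ℝ) • v₁ + (n₁ : ℝ) • v₂) ((m₂ : ℝ) • v₁ + (n₂ : ℝ) • v₂) ^ 2
        = d ^ 2 * (((m₁ : ℝ) - m₂) ^ 2 + ((m₁ : ℝ) - m₂) * ((n₁ : ℝ) - n₂) + ((n₁ : ℝ) - n₂) ^ 2) := by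
      rw [EuclideanSpace.dist_eq, Real.sq_sqrt (by positivity)]
      simp only [hv₁, hv₂, Fin.sum_univ_two, PiLp.add_apply, PiLp.smul_apply, PiLp.toLp_apply, smul_eq_mul,
        Matrix.cons_val_zero, Matrix.cons_val_one, Matrix.head_cons, Real.dist_eq, sq_abs]
      linear_combination (((n₁ : ℝ) - n₂) * d / 2) ^ 2 * hsq3
    rw [hexp]
    have hk' : (1 : ℝ) ≤ ((m₁ : ℝ) - m₂) ^ 2 + ((m₁ : ℝ) - m₂) * ((n₁ : ℝ) - n₂) + ((n₁ : ℝ) - n₂) ^ 2 := by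
      exact_mod_cast hk
    nlinarith
  have dpq : d ^ 2 ≤ ‖p - q‖ ^ 2 := by
    have := key p hp q hq hpq; rwa [dist_eq_norm] at this
  have dpr : d ^ 2 ≤ ‖p - r‖ ^ 2 := by
    have := key p hp r hr hpr; rwa [dist_eq_norm] at this
  have dqr : d ^ 2 ≤ ‖q - r‖ ^ 2 := by
    have := key q hq r hr hqr; rwa [dist_eq_norm] at this
  have hA : ‖z - p‖ < R_S := by rw [← dist_eq_norm]; exact hzp
  have hB : ‖z - q‖ < R_S := by rw [← dist_eq_norm]; exact hzq
  have hC : ‖z - r‖ < R_S := by rw [← dist_eq_norm]; exact hzr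
  have epq : p - q = (z - q) - (z - p) := by abel
  have epr : p - r = (z - r) - (z - p) := by abel
  have eqr : q - r = (z - r) - (z - q) := by abel
  have dpq' : d ^ 2 ≤ ‖z - q‖ ^ 2 - 2 * (inner ℝ (z - q) (z - p) : ℝ) + ‖z - p‖ ^ 2 := by
    rw [epq, norm_sub_sq_real] at dpq; exact dpq
  have dpr' : d ^ 2 ≤ ‖z - r‖ ^ 2 - 2 * (inner ℝ (z - r) (z - p) : ℝ) + ‖z - p‖ ^ 2 := by
    rw [epr, norm_sub_sq_real] at dpr; exact dpr
  have dqr' : d ^ 2 ≤ ‖z - r‖ ^ 2 - 2 * (inner ℝ (z - r) (z - q) : ℝ) + ‖z - q‖ ^ 2 := by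
    rw [eqr, norm_sub_sq_real] at dqr; exact dqr
  have h0 : (0 : ℝ) ≤ ‖(z - p) + (z - q) + (z - r)‖ ^ 2 := sq_nonneg _
  have h0' : ‖(z - p) + (z - q) + (z - r)‖ ^ 2
      = ‖z - p‖ ^ 2 + 2 * (inner ℝ (z - p) (z - q) : ℝ) + ‖z - q‖ ^ 2
        + 2 * ((inner ℝ (z - p) (z - r) : ℝ) + (inner ℝ (z - q) (z - r) : ℝ)) + ‖z - r‖ ^ 2 := by
    rw [norm_add_sq_real ((z - p) + (z - q)) (z - r), norm_add_sq_real (z - p) (z - q),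
      inner_add_left]
  rw [h0'] at h0
  have s1 : (inner ℝ (z - q) (z - p) : ℝ) = (inner ℝ (z - p) (z - q) : ℝ) := real_inner_comm (z - p) (z - q)
  have s2 : (inner ℝ (z - r) (z - p) : ℝ) = (inner ℝ (z - p) (z - r) : ℝ) := real_inner_comm (z - p) (z - r)
  have s3 : (inner ℝ (z - r) (z - q) : ℝ) = (inner ℝ (z - q) (z - r) : ℝ) := real_inner_comm (z - q) (z - r)
  rw [s1] at dpq'
  rw [s2] at dpr'
  rw [s3] at dqr'
  have hA2 : ‖z - p‖ ^ 2 < R_S ^ 2 := by nlinarith [norm_nonneg (z - p)]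
  have hB2 : ‖z - q‖ ^ 2 < R_S ^ 2 := by nlinarith [norm_nonneg (z - q)]
  have hC2 : ‖z - r‖ ^ 2 < R_S ^ 2 := by nlinarith [norm_nonneg (z - r)]
  linarith
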